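/- arXiv:2410.05846 — 2 statements merged into one kernel-verified Lean document; each statement's English description precedes it below -/
import Mathlib

section
/- Let V be a real vector space of dimension 2n+1, let η be a linear functional on V and ω an alternating bilinear form on V such that η ∧ ωⁿ ≠ 0 (as an alternating (2n+1)-form). Then the linear map ♭ : V → V* defined by ♭(X) = ω(X, ·) + η(X)·η is a linear isomorphism. -/
noncomputable section WedgeMachinery

variable {V : Type*} [AddCommGroup V] [Module ℝ V]

/-- Wedge product of real-valued alternating forms, via `AlternatingMap.domCoprod`
(the shuffle convention, with no factorial factors). -/
def altWedge {a b : ℕ} (α : V [⋀^Fin a]→ₗ[ℝ] ℝ) (β : V [⋀^Fin b]→ₗ[ℝ] ℝ) :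
    V [⋀^Fin (a + b)]→ₗ[ℝ] ℝ :=
  ((LinearMap.mul' ℝ ℝ).compAlternatingMap (α.domCoprod β)).domDomCongr finSumFinEquiv

/-- `n`-th wedge power of an alternating `2`-form. -/
def altPow (ω : V [⋀^Fin 2]→ₗ[ℝ] ℝ) : (n : ℕ) → V [⋀^Fin (2 * n)]→ₗ[ℝ] ℝ
  | 0 => AlternatingMap.constOfIsEmpty ℝ V (Fin 0) 1
  | n + 1 => altWedge (altPow ω n) ω

/-- A linear functional, regarded as an alternating `1`-form. -/
def alt1 (η : V →ₗ[ℝ] ℝ) : V [⋀^Fin 1]→ₗ[ℝ] ℝ :=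
  AlternatingMap.ofSubsingleton ℝ V ℝ 0 η

end WedgeMachinery

section Aux

variable {V : Type*} [AddCommGroup V] [Module ℝ V]

lemma altWedge_vanish {a b : ℕ} (α : V [⋀^Fin a]→ₗ[ℝ] ℝ) (β : V [⋀^Fin b]→ₗ[ℝ] ℝ) (X : V)
    (hα : ∀ v : Fin a → V, (∃ i, v i = X) → α v = 0)
    (hβ : ∀ v : Fin b → V, (∃ i, v i = X) → β v = 0) :
    ∀ v : Fin (a + b) → V, (∃ i, v i = X) → altWedge α β v = 0 := by
  rintro v ⟨j, hj⟩
  unfold altWedge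
  rw [AlternatingMap.domDomCongr_apply, LinearMap.compAlternatingMap_apply]
  have : (α.domCoprod β) (v ∘ finSumFinEquiv) = 0 := by
    have hco := AlternatingMap.domCoprod_coe α β
    have heval : (α.domCoprod β) (v ∘ finSumFinEquiv) =
        (∑ σ : Equiv.Perm.ModSumCongr (Fin a) (Fin b),
          AlternatingMap.domCoprod.summand α β σ) (v ∘ finSumFinEquiv) := by
      rw [← hco]; rfl
    rw [heval, MultilinearMap.sum_apply]
    apply Finset.sum_eq_zero
    intro σ _
    induction σ using Quotient.inductionOn' with
    | h π =>
      rw [AlternatingMap.domCoprod.summand_mk'']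
      set w : Fin a ⊕ Fin b → V := v ∘ finSumFinEquiv
      have hw : ∃ k, w k = X := ⟨finSumFinEquiv.symm j, by simp [w, hj]⟩
      obtain ⟨k, hk⟩ := hw
      rw [MultilinearMap.smul_apply, MultilinearMap.domDomCongr_apply,
        MultilinearMap.domCoprod_apply]
      rcases hki : π⁻¹ k with i | i
      · have : α (fun i' => w (π (Sum.inl i'))) = 0 := by
          apply hα; exact ⟨i, by rw [← hki]; simp [hk]⟩
        simp only [AlternatingMap.coe_multilinearMap]; rw [this]; simp
      · have : β (fun i' => w (π (Sum.inr i'))) = 0 := by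
          apply hβ; exact ⟨i, by rw [← hki]; simp [hk]⟩
        simp only [AlternatingMap.coe_multilinearMap]; rw [this]; simp
  rw [this]; simp

omit [AddCommGroup V] [Module ℝ V] in
lemma pair_eta (v : Fin 2 → V) : v = ![v 0, v 1] := by
  funext i; fin_cases i <;> rfl

lemma omega_swap (ω : V [⋀^Fin 2]→ₗ[ℝ] ℝ) (x y : V) : ω ![x, y] = -ω ![y, x] := by
  have := ω.map_swap ![y, x] (show (0 : Fin 2) ≠ 1 by decide)
  have h2 : (![y, x] ∘ Equiv.swap (0 : Fin 2) 1) = ![x, y] := by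
    funext i; fin_cases i <;> rfl
  rw [h2] at this
  rw [this]

lemma altPow_vanish (ω : V [⋀^Fin 2]→ₗ[ℝ] ℝ) (X : V)
    (hω : ∀ v : V, ω ![X, v] = 0) (n : ℕ) :
    ∀ v : Fin (2 * n) → V, (∃ i, v i = X) → altPow ω n v = 0 := by
  induction n with
  | zero => rintro v ⟨i, -⟩; exact absurd i.2 (by simp)
  | succ n ih =>
    have hω2 : ∀ v : Fin 2 → V, (∃ i, v i = X) → ω v = 0 := by
      rintro v ⟨i, hi⟩
      rw [pair_eta v]
      fin_cases i <;> simp only [Fin.isValue] at hi <;>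
        [skip; skip] <;> first
        | (rw [show v 0 = X from hi]; exact hω _)
        | (rw [show v 1 = X from hi, omega_swap, hω, neg_zero])
    exact altWedge_vanish (altPow ω n) ω X ih hω2

end Aux

/-- If `η ∧ ωⁿ ≠ 0` on a `(2n+1)`-dimensional real vector space `V`, then
the musical map `♭ : V → V*`, `♭(X) = ω(X, ·) + η(X)·η`, is a linear isomorphism. -/
theorem flat_linear_isomorphism {V : Type*} [AddCommGroup V] [Module ℝ V]
    [FiniteDimensional ℝ V] {n : ℕ} (hdim : Module.finrank ℝ V = 2 * n + 1)
    (η : Module.Dual ℝ V) (ω : V [⋀^Fin 2]→ₗ[ℝ] ℝ)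
    (hnd : altWedge (alt1 η) (altPow ω n) ≠ 0) :
    ∃ e : V ≃ₗ[ℝ] Module.Dual ℝ V, ∀ X v : V, e X v = ω ![X, v] + η X * η v := by
  classical
  -- the flat map as a linear map
  let f : V →ₗ[ℝ] Module.Dual ℝ V :=
    { toFun := fun X =>
        { toFun := fun v => ω ![X, v] + η X * η v
          map_add' := fun v w => by
            show ω ![X, v + w] + η X * η (v + w) = _
            have h1 : ω ![X, v + w] = ω ![X, v] + ω ![X, w] := by
              rw [omega_swap ω X (v + w), ω.map_vecCons_add ![X] v w,
                omega_swap ω v X, omega_swap ω w X]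
              ring
            rw [h1, map_add]; ring
          map_smul' := fun c v => by
            show ω ![X, c • v] + η X * η (c • v) = _
            have h1 : ω ![X, c • v] = c * ω ![X, v] := by
              rw [omega_swap ω X (c • v), ω.map_vecCons_smul ![X] c v,
                omega_swap ω v X]
              simp only [smul_eq_mul]; ring
            simp only [h1, map_smul, smul_eq_mul, RingHom.id_apply]; ring }
      map_add' := fun X Y => by
        ext v
        simp only [LinearMap.coe_mk, AddHom.coe_mk, LinearMap.add_apply, map_add]
        have h1 : ω ![X + Y, v] = ω ![X, v] + ω ![Y, v] := ω.map_vecCons_add ![v] X Y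
        rw [h1]; ring
      map_smul' := fun c X => by
        ext v
        simp only [LinearMap.coe_mk, AddHom.coe_mk, RingHom.id_apply, LinearMap.smul_apply,
          map_smul, smul_eq_mul]
        have h1 : ω ![c • X, v] = c * ω ![X, v] := ω.map_vecCons_smul ![v] c X
        rw [h1]; ring }
  have hfapp : ∀ X v : V, f X v = ω ![X, v] + η X * η v := fun X v => rfl
  -- f is injective
  have hinj : Function.Injective f := by
    rw [← LinearMap.ker_eq_bot, LinearMap.ker_eq_bot']
    intro X hX
    by_contra hX0
    have hfx : ∀ v : V, ω ![X, v] + η X * η v = 0 := by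
      intro v
      have := congrFun (congrArg (DFunLike.coe) hX) v
      simpa [hfapp] using this
    have hself : ω ![X, X] = 0 :=
      ω.map_eq_zero_of_eq ![X, X] (i := 0) (j := 1) rfl (by decide)
    have hηX : η X = 0 := by
      have := hfx X
      rw [hself, zero_add] at this
      exact (mul_self_eq_zero).mp this
    have hωX : ∀ v : V, ω ![X, v] = 0 := by
      intro v
      have := hfx v
      rwa [hηX, zero_mul, add_zero] at this
    -- insertion of X kills η, ω, hence the whole top form
    have hη1 : ∀ v : Fin 1 → V, (∃ i, v i = X) → alt1 η v = 0 := by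
      rintro v ⟨i, hi⟩
      have : v 0 = X := by rwa [Subsingleton.elim (0 : Fin 1) i]
      simp [alt1, this, hηX]
    have hωn := altPow_vanish ω X hωX n
    have hvan := altWedge_vanish (alt1 η) (altPow ω n) X hη1 hωn
    -- build a basis containing X
    have hli : LinearIndepOn ℝ id ({X} : Set V) :=
      (linearIndepOn_singleton_iff ℝ).mpr (by simpa using hX0)
    let s := hli.extend (Set.subset_univ _)
    let b : Module.Basis s ℝ V := Module.Basis.extend hli
    haveI : Fintype s := FiniteDimensional.fintypeBasisIndex b
    have hXs : X ∈ s := hli.subset_extend _ rfl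
    have hcard : Fintype.card s = 1 + 2 * n := by
      rw [← Module.finrank_eq_card_basis b, hdim]; ring
    let e2 : s ≃ Fin (1 + 2 * n) := Fintype.equivFinOfCardEq hcard
    let b' : Module.Basis (Fin (1 + 2 * n)) ℝ V := b.reindex e2
    have hmem : ∃ i, b' i = X := by
      refine ⟨e2 ⟨X, hXs⟩, ?_⟩
      rw [Module.Basis.reindex_apply, Equiv.symm_apply_apply]
      exact Module.Basis.extend_apply_self hli ⟨X, hXs⟩
    have hz : altWedge (alt1 η) (altPow ω n) (⇑b') = 0 := hvan _ hmem
    exact hnd ((AlternatingMap.map_basis_eq_zero_iff b' _).mp hz)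
  -- conclude
  refine ⟨LinearEquiv.ofBijective f ⟨hinj, ?_⟩, fun X v => hfapp X v⟩
  exact (LinearMap.injective_iff_surjective_of_finrank_eq_finrank
    (Subspace.dual_finrank_eq).symm).mp hinj
end

section
/- Let V be a real vector space of dimension 2n+1, let η be a linear functional on V and ω an alternating bilinear form on V. Then η ∧ ωⁿ ≠ 0 (as an alternating (2n+1)-form) if and only if the linear map ♭ : V → V*, ♭(X) = ω(X,·) + η(X)·η, is an isomorphism and there exists a vector R ∈ V with ω(R,·) = 0 and η(R) = 1. -/
noncomputable section

open Equiv Finset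
open scoped TensorProduct

variable {V : Type*} [AddCommGroup V] [Module ℝ V]

theorem altWedge_eval {a b : ℕ} (α : V [⋀^Fin a]→ₗ[ℝ] ℝ) (β : V [⋀^Fin b]→ₗ[ℝ] ℝ)
    (v : Fin (a + b) → V) :
    ((a.factorial * b.factorial : ℕ) : ℝ) * altWedge α β v =
      ∑ σ : Equiv.Perm (Fin a ⊕ Fin b), ((Equiv.Perm.sign σ : ℤ) : ℝ) *
        (α (fun i => v (finSumFinEquiv (σ (Sum.inl i)))) *
         β (fun i => v (finSumFinEquiv (σ (Sum.inr i))))) := by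
  classical
  set u : Fin a ⊕ Fin b → V := fun s => v (finSumFinEquiv s) with hu
  have h1 : altWedge α β v = LinearMap.mul' ℝ ℝ ((α.domCoprod β) u) := rfl
  have key := congrArg (fun F : V [⋀^(Fin a ⊕ Fin b)]→ₗ[ℝ] (ℝ ⊗[ℝ] ℝ) => F u)
    (MultilinearMap.domCoprod_alternization_eq α β)
  simp only [MultilinearMap.alternatization_apply, MultilinearMap.domDomCongr_apply,
    MultilinearMap.domCoprod_apply, AlternatingMap.coe_multilinearMap,
    MultilinearMap.smul_apply, Fintype.card_fin] at key
  have key2 := congrArg (LinearMap.mul' ℝ ℝ) key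
  rw [map_sum] at key2
  simp only [AlternatingMap.smul_apply] at key2
  rw [map_nsmul] at key2
  simp only [LinearMap.map_smul_of_tower, LinearMap.mul'_apply] at key2
  rw [h1, ← nsmul_eq_mul, ← key2]
  exact Finset.sum_congr rfl fun σ _ => by simp [hu, Units.smul_def, zsmul_eq_mul]
end

set_option linter.unusedSectionVars false
section Helpers
variable {V : Type*} [AddCommGroup V] [Module ℝ V]

theorem vec2_eta (g : Fin 2 → V) : ![g 0, g 1] = g := by
  funext i; fin_cases i <;> rfl

theorem update_vec2_zero (x y z : V) : Function.update ![x, y] 0 z = ![z, y] := by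
  funext i; fin_cases i <;> simp [Function.update]

theorem update_vec2_one (x y z : V) : Function.update ![x, y] 1 z = ![x, z] := by
  funext i; fin_cases i <;> simp [Function.update]

variable (ω : V [⋀^Fin 2]→ₗ[ℝ] ℝ)

theorem omega_self (x : V) : ω ![x, x] = 0 :=
  ω.map_eq_zero_of_eq (i := 0) (j := 1) ![x, x] rfl (by decide)

theorem omega_skew (x y : V) : ω ![y, x] = - ω ![x, y] := by
  have h0 := ω.map_eq_zero_of_eq (i := 0) (j := 1) ![x + y, x + y] rfl (by decide)
  have e1 : (![x + y, x + y] : Fin 2 → V) = Function.update ![x, x + y] 0 (x + y) := by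
    rw [update_vec2_zero]
  rw [e1, ω.map_update_add] at h0
  have e2 : Function.update ![x, x + y] 0 x = ![x, x + y] := by rw [update_vec2_zero]
  have e3 : Function.update ![x, x + y] 0 y = ![y, x + y] := by rw [update_vec2_zero]
  rw [e2, e3] at h0
  have e4 : (![x, x + y] : Fin 2 → V) = Function.update ![x, x] 1 (x + y) := by
    rw [update_vec2_one]
  have e5 : (![y, x + y] : Fin 2 → V) = Function.update ![y, x] 1 (x + y) := by
    rw [update_vec2_one]
  rw [e4, ω.map_update_add, e5, ω.map_update_add, update_vec2_one, update_vec2_one,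
    update_vec2_one, update_vec2_one, omega_self, omega_self] at h0
  linarith

/-- The bilinear form associated to `ω`. -/
def Blf : V →ₗ[ℝ] V →ₗ[ℝ] ℝ :=
  LinearMap.mk₂ ℝ (fun x y => ω ![x, y])
    (fun x x' y => by
      show ω ![x + x', y] = ω ![x, y] + ω ![x', y]
      rw [show (![x + x', y] : Fin 2 → V) = Function.update ![x, y] 0 (x + x') by
        rw [update_vec2_zero], ω.map_update_add, update_vec2_zero, update_vec2_zero])
    (fun c x y => by
      show ω ![c • x, y] = c • ω ![x, y]
      rw [show (![c • x, y] : Fin 2 → V) = Function.update ![x, y] 0 (c • x) by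
        rw [update_vec2_zero], ω.map_update_smul, update_vec2_zero])
    (fun x y y' => by
      show ω ![x, y + y'] = ω ![x, y] + ω ![x, y']
      rw [show (![x, y + y'] : Fin 2 → V) = Function.update ![x, y] 1 (y + y') by
        rw [update_vec2_one], ω.map_update_add, update_vec2_one, update_vec2_one])
    (fun c x y => by
      show ω ![x, c • y] = c • ω ![x, y]
      rw [show (![x, c • y] : Fin 2 → V) = Function.update ![x, y] 1 (c • y) by
        rw [update_vec2_one], ω.map_update_smul, update_vec2_one])

@[simp] theorem Blf_apply (x y : V) : Blf ω x y = ω ![x, y] := rfl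

end Helpers

section Kills
variable {V : Type*} [AddCommGroup V] [Module ℝ V]

/-- `γ` vanishes on every tuple containing `X`. -/
def Kills {m : ℕ} (γ : V [⋀^Fin m]→ₗ[ℝ] ℝ) (X : V) : Prop :=
  ∀ v : Fin m → V, (∃ i, v i = X) → γ v = 0

theorem kills_altWedge {a b : ℕ} {α : V [⋀^Fin a]→ₗ[ℝ] ℝ} {β : V [⋀^Fin b]→ₗ[ℝ] ℝ} {X : V}
    (hα : Kills α X) (hβ : Kills β X) : Kills (altWedge α β) X := by
  intro v ⟨j, hj⟩
  have key := altWedge_eval α β v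
  have hz : ∀ σ : Equiv.Perm (Fin a ⊕ Fin b),
      ((Equiv.Perm.sign σ : ℤ) : ℝ) *
        (α (fun i => v (finSumFinEquiv (σ (Sum.inl i)))) *
         β (fun i => v (finSumFinEquiv (σ (Sum.inr i))))) = 0 := by
    intro σ
    rcases hs : σ.symm (finSumFinEquiv.symm j) with i | i
    · have : α (fun i => v (finSumFinEquiv (σ (Sum.inl i)))) = 0 := by
        apply hα
        exact ⟨i, by rw [← hs, Equiv.apply_symm_apply, Equiv.apply_symm_apply, hj]⟩
      rw [this]; ring
    · have : β (fun i => v (finSumFinEquiv (σ (Sum.inr i)))) = 0 := by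
        apply hβ
        exact ⟨i, by rw [← hs, Equiv.apply_symm_apply, Equiv.apply_symm_apply, hj]⟩
      rw [this]; ring
  rw [Finset.sum_congr rfl (fun σ _ => hz σ), Finset.sum_const, smul_zero] at key
  have hN : ((a.factorial * b.factorial : ℕ) : ℝ) ≠ 0 := by
    positivity
  exact (mul_eq_zero.mp key).resolve_left hN

theorem kills_omega {ω : V [⋀^Fin 2]→ₗ[ℝ] ℝ} {X : V} (h : ∀ y, ω ![X, y] = 0) :
    Kills ω X := by
  intro v ⟨i, hi⟩
  rcases (by omega : (i : ℕ) = 0 ∨ (i : ℕ) = 1) with h1 | h1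
  · have hv : v 0 = X := by rwa [show (0 : Fin 2) = i from (Fin.ext h1.symm)]
    rw [← vec2_eta v, hv]; exact h _
  · have hv : v 1 = X := by rwa [show (1 : Fin 2) = i from (Fin.ext h1.symm)]
    rw [← vec2_eta v, hv, omega_skew, h, neg_zero]

theorem kills_altPow {ω : V [⋀^Fin 2]→ₗ[ℝ] ℝ} {X : V} (h : ∀ y, ω ![X, y] = 0) (n : ℕ) :
    Kills (altPow ω n) X := by
  induction n with
  | zero => rintro v ⟨i, -⟩; exact i.elim0
  | succ n ih => exact kills_altWedge ih (kills_omega h)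

theorem sum_support_image {κ β M : Type*} [Fintype κ] [Fintype β] [DecidableEq β]
    [AddCommMonoid M] (g : κ → β) (hg : Function.Injective g) (f : β → M)
    (hsupp : ∀ x, f x ≠ 0 → ∃ t, g t = x) : ∑ x, f x = ∑ t, f (g t) := by
  rw [← Finset.sum_image (fun x _ y _ h => hg h)]
  refine (Finset.sum_subset (Finset.subset_univ _) fun x _ hx => ?_).symm
  by_contra h0
  obtain ⟨t, rfl⟩ := hsupp x h0
  exact hx (Finset.mem_image_of_mem _ (Finset.mem_univ t))

end Kills

section E1sec
variable {V : Type*} [AddCommGroup V] [Module ℝ V]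

theorem eval_E1 {n : ℕ} (η : V →ₗ[ℝ] ℝ) (ω : V [⋀^Fin 2]→ₗ[ℝ] ℝ) (R : V)
    (hR : ∀ y, ω ![R, y] = 0) (hηR : η R = 1) (w : Fin (2 * n) → V) :
    altWedge (alt1 η) (altPow ω n)
      (fun j => Sum.elim (fun _ : Fin 1 => R) w (finSumFinEquiv.symm j)) = altPow ω n w := by
  classical
  set v : Fin (1 + 2 * n) → V :=
    fun j => Sum.elim (fun _ : Fin 1 => R) w (finSumFinEquiv.symm j) with hv
  have hu : ∀ s, v (finSumFinEquiv s) = Sum.elim (fun _ : Fin 1 => R) w s := by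
    intro s; simp [hv]
  have key := altWedge_eval (alt1 η) (altPow ω n) v
  set F : Equiv.Perm (Fin 1 ⊕ Fin (2 * n)) → ℝ := fun σ =>
    ((Equiv.Perm.sign σ : ℤ) : ℝ) *
      (alt1 η (fun i => v (finSumFinEquiv (σ (Sum.inl i)))) *
       altPow ω n (fun i => v (finSumFinEquiv (σ (Sum.inr i))))) with hF
  let g : Equiv.Perm (Fin 1) × Equiv.Perm (Fin (2 * n)) → Equiv.Perm (Fin 1 ⊕ Fin (2 * n)) :=
    fun p => Equiv.Perm.sumCongrHom _ _ p
  have hg : Function.Injective g := Equiv.Perm.sumCongrHom_injective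
  have hsupp : ∀ σ, F σ ≠ 0 → ∃ p, g p = σ := by
    intro σ hσ
    have hfix : σ (Sum.inl 0) = Sum.inl 0 := by
      by_contra hne
      rcases hs : σ.symm (Sum.inl 0) with i | i
      · have h0 : i = 0 := Subsingleton.elim _ _
        rw [h0] at hs
        exact hne ((congrArg σ hs).symm.trans (σ.apply_symm_apply _))
      · apply hσ
        have hzero : altPow ω n (fun i => v (finSumFinEquiv (σ (Sum.inr i)))) = 0 := by
          apply kills_altPow hR n
          refine ⟨i, ?_⟩
          rw [← hs, Equiv.apply_symm_apply, hu]
          rfl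
        rw [hF]; dsimp only; rw [hzero]; ring
    have hmaps : Set.MapsTo σ (Set.range Sum.inl) (Set.range Sum.inl) := by
      rintro _ ⟨j, rfl⟩
      have h0 : j = 0 := Subsingleton.elim _ _
      rw [h0, hfix]
      exact ⟨0, rfl⟩
    exact Equiv.Perm.mem_sumCongrHom_range_of_perm_mapsTo_inl hmaps
  rw [sum_support_image g hg F hsupp] at key
  have hval : ∀ p : Equiv.Perm (Fin 1) × Equiv.Perm (Fin (2 * n)),
      F (g p) = altPow ω n w := by
    rintro ⟨ρ, τ⟩
    have hρ : ρ = 1 := Subsingleton.elim _ _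
    subst hρ
    have h1 : (fun i => v (finSumFinEquiv ((g (1, τ)) (Sum.inl i)))) =
        fun _ : Fin 1 => R := by
      funext i
      have h0 : i = 0 := Subsingleton.elim _ _
      rw [h0]
      rw [show (g (1, τ)) (Sum.inl 0) = Sum.inl 0 from rfl, hu]
      rfl
    have h2 : (fun i => v (finSumFinEquiv ((g (1, τ)) (Sum.inr i)))) = w ∘ τ := by
      funext i
      rw [show (g (1, τ)) (Sum.inr i) = Sum.inr (τ i) from rfl, hu]
      rfl
    have hsign : Equiv.Perm.sign (g (1, τ)) = Equiv.Perm.sign τ := by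
      show Equiv.Perm.sign (Equiv.sumCongr 1 τ) = _
      rw [Equiv.Perm.sign_sumCongr, map_one, one_mul]
    rw [hF]; dsimp only
    rw [h1, h2, hsign, AlternatingMap.map_perm]
    have halt1 : alt1 η (fun _ : Fin 1 => R) = 1 := by
      show η R = 1
      exact hηR
    rw [halt1]
    rcases Int.units_eq_one_or (Equiv.Perm.sign τ) with h | h <;> rw [h] <;> simp
  rw [Finset.sum_congr rfl (fun p _ => hval p), Finset.sum_const, Finset.card_univ] at key
  have hcard : Fintype.card (Equiv.Perm (Fin 1) × Equiv.Perm (Fin (2 * n))) =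
      (2 * n).factorial := by
    simp [Fintype.card_perm]
  rw [hcard] at key
  have hN : ((Nat.factorial 1 * (2 * n).factorial : ℕ) : ℝ) ≠ 0 := by positivity
  have : ((Nat.factorial 1 * (2 * n).factorial : ℕ) : ℝ) * altWedge (alt1 η) (altPow ω n) v =
      ((Nat.factorial 1 * (2 * n).factorial : ℕ) : ℝ) * altPow ω n w := by
    rw [key, nsmul_eq_mul]
    push_cast [Nat.factorial_one]
    ring
  exact mul_left_cancel₀ hN this
end E1sec

section StdFam
variable {V : Type*} [AddCommGroup V] [Module ℝ V]

/-- The interleaved tuple associated to a family of pairs. -/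
def wP {m : ℕ} (Q : Fin m → V × V) : Fin (2 * m) → V := fun j =>
  if (j : ℕ) % 2 = 0 then (Q ⟨(j : ℕ) / 2, by have := j.isLt; omega⟩).1
  else (Q ⟨(j : ℕ) / 2, by have := j.isLt; omega⟩).2

theorem wP_spec1 {m : ℕ} (Q : Fin m → V × V) (j : Fin (2 * m)) (k : Fin m)
    (h : (j : ℕ) = 2 * (k : ℕ)) : wP Q j = (Q k).1 := by
  unfold wP
  rw [if_pos (by omega)]
  congr 1
  exact congrArg Q (Fin.ext (show (j : ℕ) / 2 = (k : ℕ) by omega))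

theorem wP_spec2 {m : ℕ} (Q : Fin m → V × V) (j : Fin (2 * m)) (k : Fin m)
    (h : (j : ℕ) = 2 * (k : ℕ) + 1) : wP Q j = (Q k).2 := by
  unfold wP
  rw [if_neg (by omega)]
  congr 1
  exact congrArg Q (Fin.ext (show (j : ℕ) / 2 = (k : ℕ) by omega))

def getp (p : V × V) (s : Fin 2) : V := if s = 0 then p.1 else p.2

/-- Standard (symplectic) family for `ω`. -/
def IsStd (ω : V [⋀^Fin 2]→ₗ[ℝ] ℝ) {m : ℕ} (Q : Fin m → V × V) : Prop :=
  (∀ k, ω ![(Q k).1, (Q k).2] = 1) ∧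
  (∀ k l, ω ![(Q k).1, (Q l).1] = 0) ∧
  (∀ k l, ω ![(Q k).2, (Q l).2] = 0) ∧
  (∀ k l, k ≠ l → ω ![(Q k).1, (Q l).2] = 0)

/-- position of the `s`-component of pair `k` in `Fin (2*n) ⊕ Fin 2`. -/
def posP {n : ℕ} (k : Fin (n + 1)) (s : Fin 2) : Fin (2 * n) ⊕ Fin 2 :=
  if h : (k : ℕ) < n then Sum.inl ⟨2 * (k : ℕ) + (s : ℕ), by have := s.isLt; omega⟩
  else Sum.inr s

theorem posP_inj {n : ℕ} {k k' : Fin (n + 1)} {s s' : Fin 2}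
    (h : posP k s = posP k' s') : k = k' ∧ s = s' := by
  unfold posP at h
  by_cases h1 : (k : ℕ) < n <;> by_cases h2 : (k' : ℕ) < n <;>
    simp only [h1, h2, dite_true, dite_false, dif_pos, dif_neg] at h
  · have hv := congrArg (fun x => match x with | Sum.inl a => (a : ℕ) | Sum.inr b => (b : ℕ)) h
    simp at hv
    have hs := s.isLt; have hs' := s'.isLt
    constructor
    · exact Fin.ext (by omega)
    · exact Fin.ext (by omega)
  · exact absurd h (by simp)
  · exact absurd h (by simp)
  · refine ⟨Fin.ext ?_, Sum.inr_injective h⟩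
    have := k.isLt; have := k'.isLt; omega

theorem posP_surj {n : ℕ} (a : Fin (2 * n) ⊕ Fin 2) : ∃ k s, a = posP k s := by
  rcases a with i | t
  · refine ⟨⟨(i : ℕ) / 2, by have := i.isLt; omega⟩, ⟨(i : ℕ) % 2, by omega⟩, ?_⟩
    unfold posP
    rw [dif_pos (by simp; have := i.isLt; omega)]
    congr 1
    exact Fin.ext (by simp; omega)
  · exact ⟨Fin.last n, t, by unfold posP; rw [dif_neg (by simp)]⟩

/-- The evaluation family on `Fin (2*n) ⊕ Fin 2`. -/
def Uf {n : ℕ} (Q : Fin (n + 1) → V × V) : Fin (2 * n) ⊕ Fin 2 → V :=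
  Sum.elim (wP (Q ∘ Fin.castSucc))
    (fun t => if t = 0 then (Q (Fin.last n)).1 else (Q (Fin.last n)).2)

theorem Uf_eq {n : ℕ} (Q : Fin (n + 1) → V × V) (s : Fin (2 * n) ⊕ Fin 2) :
    wP Q (finSumFinEquiv s) = Uf Q s := by
  rcases s with i | t
  · simp only [finSumFinEquiv_apply_left, Uf, Sum.elim_inl]
    rcases Nat.even_or_odd (i : ℕ) with ⟨q, hq⟩ | ⟨q, hq⟩
    · have hqlt : q < n := by have := i.isLt; omega
      rw [wP_spec1 Q _ ⟨q, by omega⟩ (by show (Fin.castAdd 2 i : ℕ) = _; simp [Fin.coe_castAdd]; omega),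
        wP_spec1 (Q ∘ Fin.castSucc) i ⟨q, hqlt⟩ (by show (i:ℕ) = 2 * q; omega)]
      rfl
    · have hqlt : q < n := by have := i.isLt; omega
      rw [wP_spec2 Q _ ⟨q, by omega⟩ (by show (Fin.castAdd 2 i : ℕ) = _; simp [Fin.coe_castAdd]; omega),
        wP_spec2 (Q ∘ Fin.castSucc) i ⟨q, hqlt⟩ (by show (i:ℕ) = 2 * q + 1; omega)]
      rfl
  · simp only [Uf, Sum.elim_inr]
    rcases (by omega : (t : ℕ) = 0 ∨ (t : ℕ) = 1) with h | h
    · have ht : t = 0 := Fin.ext h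
      subst ht
      rw [if_pos rfl, wP_spec1 Q _ (Fin.last n) (by simp [Fin.coe_natAdd]; try omega)]
    · have ht : t = 1 := Fin.ext h
      subst ht
      rw [if_neg (by decide), wP_spec2 Q _ (Fin.last n) (by simp [Fin.coe_natAdd]; try omega)]

theorem Uf_posP {n : ℕ} (Q : Fin (n + 1) → V × V) (k : Fin (n + 1)) (s : Fin 2) :
    Uf Q (posP k s) = getp (Q k) s := by
  unfold posP
  by_cases h : (k : ℕ) < n
  · rw [dif_pos h]
    simp only [Uf, Sum.elim_inl]
    rcases (by omega : (s : ℕ) = 0 ∨ (s : ℕ) = 1) with hs | hs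
    · rw [wP_spec1 (Q ∘ Fin.castSucc) _ ⟨(k : ℕ), h⟩ (by simp; omega)]
      have : s = 0 := Fin.ext hs
      subst this
      show (Q (Fin.castSucc ⟨(k : ℕ), h⟩)).1 = getp (Q k) 0
      rw [show Fin.castSucc ⟨(k : ℕ), h⟩ = k from Fin.ext rfl]
      rfl
    · rw [wP_spec2 (Q ∘ Fin.castSucc) _ ⟨(k : ℕ), h⟩ (by simp; omega)]
      have : s = 1 := Fin.ext hs
      subst this
      show (Q (Fin.castSucc ⟨(k : ℕ), h⟩)).2 = getp (Q k) 1
      rw [show Fin.castSucc ⟨(k : ℕ), h⟩ = k from Fin.ext rfl]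
      rfl
  · rw [dif_neg h]
    have hk : k = Fin.last n := Fin.ext (by have := k.isLt; simp; omega)
    subst hk
    rcases (by omega : (s : ℕ) = 0 ∨ (s : ℕ) = 1) with hs | hs
    · have : s = 0 := Fin.ext hs; subst this; rfl
    · have : s = 1 := Fin.ext hs; subst this; rfl

end StdFam

section StdFam2
variable {V : Type*} [AddCommGroup V] [Module ℝ V] {ω : V [⋀^Fin 2]→ₗ[ℝ] ℝ}

theorem valGet {m : ℕ} {Q : Fin m → V × V} (hQ : IsStd ω Q) (k l : Fin m) (s t : Fin 2)
    (h : ω ![getp (Q k) s, getp (Q l) t] ≠ 0) : k = l ∧ s ≠ t := by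
  obtain ⟨h1, h11, h22, h12⟩ := hQ
  rcases (by omega : (s : ℕ) = 0 ∨ (s : ℕ) = 1) with hs | hs <;>
    rcases (by omega : (t : ℕ) = 0 ∨ (t : ℕ) = 1) with ht | ht
  · rw [show s = (0 : Fin 2) from Fin.ext hs, show t = (0 : Fin 2) from Fin.ext ht] at h
    exact absurd (show ω ![getp (Q k) 0, getp (Q l) 0] = 0 from h11 k l) h
  · rw [show s = (0 : Fin 2) from Fin.ext hs, show t = (1 : Fin 2) from Fin.ext ht] at h ⊢
    refine ⟨?_, by decide⟩
    by_contra hkl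
    exact h (show ω ![getp (Q k) 0, getp (Q l) 1] = 0 from h12 k l hkl)
  · rw [show s = (1 : Fin 2) from Fin.ext hs, show t = (0 : Fin 2) from Fin.ext ht] at h ⊢
    refine ⟨?_, by decide⟩
    by_contra hkl
    apply h
    show ω ![(Q k).2, (Q l).1] = 0
    rw [omega_skew, h12 l k (fun he => hkl he.symm), neg_zero]
  · rw [show s = (1 : Fin 2) from Fin.ext hs, show t = (1 : Fin 2) from Fin.ext ht] at h
    exact absurd (show ω ![getp (Q k) 1, getp (Q l) 1] = 0 from h22 k l) h

theorem valU {n : ℕ} {Q : Fin (n + 1) → V × V} (hQ : IsStd ω Q)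
    (a b : Fin (2 * n) ⊕ Fin 2) (h : ω ![Uf Q a, Uf Q b] ≠ 0) :
    ∃ k, (a = posP k 0 ∧ b = posP k 1) ∨ (a = posP k 1 ∧ b = posP k 0) := by
  obtain ⟨k, s, rfl⟩ := posP_surj a
  obtain ⟨l, t, rfl⟩ := posP_surj b
  rw [Uf_posP, Uf_posP] at h
  obtain ⟨rfl, hst⟩ := valGet hQ k l s t h
  refine ⟨k, ?_⟩
  rcases (by omega : (s : ℕ) = 0 ∨ (s : ℕ) = 1) with hs | hs <;>
    rcases (by omega : (t : ℕ) = 0 ∨ (t : ℕ) = 1) with ht | ht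
  · exact absurd (Fin.ext (hs.trans ht.symm)) hst
  · exact Or.inl ⟨by rw [show s = 0 from Fin.ext hs], by rw [show t = 1 from Fin.ext ht]⟩
  · exact Or.inr ⟨by rw [show s = 1 from Fin.ext hs], by rw [show t = 0 from Fin.ext ht]⟩
  · exact absurd (Fin.ext (hs.trans ht.symm)) hst

/-- The modified family: pair `k` is replaced by the last pair. -/
def Qmod {n : ℕ} (Q : Fin (n + 1) → V × V) (k : Fin (n + 1)) : Fin n → V × V := fun j =>
  if (j : ℕ) = (k : ℕ) then Q (Fin.last n) else Q (Fin.castSucc j)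

theorem Qmod_isStd {n : ℕ} {Q : Fin (n + 1) → V × V} (hQ : IsStd ω Q) (k : Fin (n + 1)) :
    IsStd ω (Qmod Q k) := by
  obtain ⟨h1, h11, h22, h12⟩ := hQ
  refine ⟨fun j => ?_, fun j l => ?_, fun j l => ?_, fun j l hjl => ?_⟩
  · unfold Qmod; split <;> apply h1
  · unfold Qmod; split <;> split <;> apply h11
  · unfold Qmod; split <;> split <;> apply h22
  · unfold Qmod
    have hjl' : (j : ℕ) ≠ (l : ℕ) := fun he => hjl (Fin.ext he)
    by_cases hj : (j : ℕ) = (k : ℕ) <;> by_cases hl : (l : ℕ) = (k : ℕ)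
    · omega
    · rw [if_pos hj, if_neg hl]
      refine h12 _ _ (fun he => ?_)
      have := congrArg Fin.val he
      rw [Fin.val_last, Fin.coe_castSucc] at this
      have := l.isLt; omega
    · rw [if_neg hj, if_pos hl]
      refine h12 _ _ (fun he => ?_)
      have := congrArg Fin.val he
      rw [Fin.val_last, Fin.coe_castSucc] at this
      have := j.isLt; omega
    · rw [if_neg hj, if_neg hl]
      refine h12 _ _ (fun he => ?_)
      have := congrArg Fin.val he
      rw [Fin.coe_castSucc, Fin.coe_castSucc] at this
      exact hjl' this

/-- The permutation putting the last pair in position `k`. -/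
def θf {n : ℕ} (k : Fin (n + 1)) : Equiv.Perm (Fin (2 * n) ⊕ Fin 2) :=
  Equiv.swap (Sum.inr 0) (posP k 0) * Equiv.swap (Sum.inr 1) (posP k 1)

section theta
variable {n : ℕ} {k : Fin (n + 1)}

theorem posP_lt_0 (h : (k : ℕ) < n) :
    posP k (0 : Fin 2) = (Sum.inl ⟨2 * (k : ℕ), by omega⟩ : Fin (2 * n) ⊕ Fin 2) := by
  unfold posP; rw [dif_pos h]; exact congrArg Sum.inl (Fin.ext (by simp))

theorem posP_lt_1 (h : (k : ℕ) < n) :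
    posP k (1 : Fin 2) = (Sum.inl ⟨2 * (k : ℕ) + 1, by omega⟩ : Fin (2 * n) ⊕ Fin 2) := by
  unfold posP; rw [dif_pos h]; exact congrArg Sum.inl (Fin.ext (by simp))

theorem posP_last (h : ¬ (k : ℕ) < n) (s : Fin 2) :
    posP k s = (Sum.inr s : Fin (2 * n) ⊕ Fin 2) := by
  unfold posP; rw [dif_neg h]

theorem θf_last (h : ¬ (k : ℕ) < n) : θf k = 1 := by
  unfold θf
  rw [posP_last h, posP_last h, Equiv.swap_self, Equiv.swap_self]
  rfl

theorem θf_inr (s : Fin 2) : θf k (Sum.inr s) = posP k s := by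
  by_cases h : (k : ℕ) < n
  case neg => rw [θf_last h, posP_last h s]; rfl
  unfold θf
  have hne01 : (Sum.inr (0 : Fin 2) : Fin (2 * n) ⊕ Fin 2) ≠ Sum.inr 1 := by
    simp [Fin.ext_iff]
  rcases (by omega : (s : ℕ) = 0 ∨ (s : ℕ) = 1) with hs | hs
  · rw [show s = 0 from Fin.ext hs]
    have e1 : Equiv.swap (Sum.inr 1) (posP k 1) (Sum.inr (0 : Fin 2)) = Sum.inr 0 :=
      Equiv.swap_apply_of_ne_of_ne hne01 (by rw [posP_lt_1 h]; simp)
    rw [Equiv.Perm.mul_apply, e1, Equiv.swap_apply_left]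
  · rw [show s = 1 from Fin.ext hs]
    have e1 : Equiv.swap (Sum.inr 1) (posP k 1) (Sum.inr (1 : Fin 2)) = posP k 1 :=
      Equiv.swap_apply_left _ _
    rw [Equiv.Perm.mul_apply, e1]
    exact Equiv.swap_apply_of_ne_of_ne (by rw [posP_lt_1 h]; simp)
      (by rw [posP_lt_1 h, posP_lt_0 h]; simp)

theorem θf_inl_pos0 (h : (k : ℕ) < n) (i : Fin (2 * n)) (hi : (i : ℕ) = 2 * (k : ℕ)) :
    θf k (Sum.inl i) = Sum.inr 0 := by
  unfold θf
  have e1 : Equiv.swap (Sum.inr 1) (posP k 1) (Sum.inl i : Fin (2 * n) ⊕ Fin 2) = Sum.inl i :=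
    Equiv.swap_apply_of_ne_of_ne (by simp) (by rw [posP_lt_1 h]; simp [Fin.ext_iff]; omega)
  rw [Equiv.Perm.mul_apply, e1,
    show (Sum.inl i : Fin (2 * n) ⊕ Fin 2) = posP k 0 by
      rw [posP_lt_0 h]; exact congrArg Sum.inl (Fin.ext hi),
    Equiv.swap_apply_right]

theorem θf_inl_pos1 (h : (k : ℕ) < n) (i : Fin (2 * n)) (hi : (i : ℕ) = 2 * (k : ℕ) + 1) :
    θf k (Sum.inl i) = Sum.inr 1 := by
  unfold θf
  have e1 : Equiv.swap (Sum.inr 1) (posP k 1) (Sum.inl i : Fin (2 * n) ⊕ Fin 2) = Sum.inr 1 := by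
    rw [show (Sum.inl i : Fin (2 * n) ⊕ Fin 2) = posP k 1 by
      rw [posP_lt_1 h]; exact congrArg Sum.inl (Fin.ext hi), Equiv.swap_apply_right]
  rw [Equiv.Perm.mul_apply, e1]
  exact Equiv.swap_apply_of_ne_of_ne (by simp [Fin.ext_iff]) (by rw [posP_lt_0 h]; simp)

theorem θf_inl_other (i : Fin (2 * n)) (hi0 : (i : ℕ) ≠ 2 * (k : ℕ))
    (hi1 : (i : ℕ) ≠ 2 * (k : ℕ) + 1) : θf k (Sum.inl i) = Sum.inl i := by
  by_cases h : (k : ℕ) < n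
  · unfold θf
    have e1 : Equiv.swap (Sum.inr 1) (posP k 1) (Sum.inl i : Fin (2 * n) ⊕ Fin 2) = Sum.inl i :=
      Equiv.swap_apply_of_ne_of_ne (by simp) (by rw [posP_lt_1 h]; simp [Fin.ext_iff]; omega)
    rw [Equiv.Perm.mul_apply, e1]
    exact Equiv.swap_apply_of_ne_of_ne (by simp) (by rw [posP_lt_0 h]; simp [Fin.ext_iff]; omega)
  · rw [θf_last h]; rfl

theorem θf_sign : Equiv.Perm.sign (θf k) = 1 := by
  by_cases h : (k : ℕ) < n
  · unfold θf
    rw [map_mul, posP_lt_0 h, posP_lt_1 h, Equiv.Perm.sign_swap (by simp),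
      Equiv.Perm.sign_swap (by simp)]
    norm_num
  · rw [θf_last h, map_one]

theorem θf_inl (Q : Fin (n + 1) → V × V) (i : Fin (2 * n)) :
    Uf Q (θf k (Sum.inl i)) = wP (Qmod Q k) i := by
  by_cases h : (k : ℕ) < n
  · by_cases hi0 : (i : ℕ) = 2 * (k : ℕ)
    · rw [θf_inl_pos0 h i hi0]
      rw [show Uf Q (Sum.inr 0) = (Q (Fin.last n)).1 from rfl,
        wP_spec1 (Qmod Q k) i ⟨(k : ℕ), h⟩ (by show (i : ℕ) = 2 * (k : ℕ); omega)]
      unfold Qmod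
      rw [if_pos (by simp)]
    · by_cases hi1 : (i : ℕ) = 2 * (k : ℕ) + 1
      · rw [θf_inl_pos1 h i hi1]
        rw [show Uf Q (Sum.inr 1) = (Q (Fin.last n)).2 from rfl,
          wP_spec2 (Qmod Q k) i ⟨(k : ℕ), h⟩ (by show (i : ℕ) = 2 * (k : ℕ) + 1; omega)]
        unfold Qmod
        rw [if_pos (by simp)]
      · rw [θf_inl_other i hi0 hi1]
        rw [show Uf Q (Sum.inl i) = wP (Q ∘ Fin.castSucc) i from rfl]
        rcases Nat.even_or_odd (i : ℕ) with ⟨q, hq⟩ | ⟨q, hq⟩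
        · have hqlt : q < n := by have := i.isLt; omega
          rw [wP_spec1 (Q ∘ Fin.castSucc) i ⟨q, hqlt⟩ (by show (i:ℕ) = 2*q; omega),
            wP_spec1 (Qmod Q k) i ⟨q, hqlt⟩ (by show (i:ℕ) = 2*q; omega)]
          unfold Qmod
          rw [if_neg (by show ¬ ((⟨q, hqlt⟩ : Fin n) : ℕ) = (k : ℕ); simp; omega)]
          rfl
        · have hqlt : q < n := by have := i.isLt; omega
          rw [wP_spec2 (Q ∘ Fin.castSucc) i ⟨q, hqlt⟩ (by show (i:ℕ) = 2*q+1; omega),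
            wP_spec2 (Qmod Q k) i ⟨q, hqlt⟩ (by show (i:ℕ) = 2*q+1; omega)]
          unfold Qmod
          rw [if_neg (by show ¬ ((⟨q, hqlt⟩ : Fin n) : ℕ) = (k : ℕ); simp; omega)]
          rfl
  · rw [θf_last h]
    rw [show Uf Q ((1 : Equiv.Perm (Fin (2*n) ⊕ Fin 2)) (Sum.inl i)) =
      wP (Q ∘ Fin.castSucc) i from rfl]
    have hke : (k : ℕ) = n := by have := k.isLt; omega
    rcases Nat.even_or_odd (i : ℕ) with ⟨q, hq⟩ | ⟨q, hq⟩
    · have hqlt : q < n := by have := i.isLt; omega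
      rw [wP_spec1 (Q ∘ Fin.castSucc) i ⟨q, hqlt⟩ (by show (i:ℕ) = 2*q; omega),
        wP_spec1 (Qmod Q k) i ⟨q, hqlt⟩ (by show (i:ℕ) = 2*q; omega)]
      unfold Qmod
      rw [if_neg (by show ¬ ((⟨q, hqlt⟩ : Fin n) : ℕ) = (k : ℕ); simp; omega)]
      rfl
    · have hqlt : q < n := by have := i.isLt; omega
      rw [wP_spec2 (Q ∘ Fin.castSucc) i ⟨q, hqlt⟩ (by show (i:ℕ) = 2*q+1; omega),
        wP_spec2 (Qmod Q k) i ⟨q, hqlt⟩ (by show (i:ℕ) = 2*q+1; omega)]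
      unfold Qmod
      rw [if_neg (by show ¬ ((⟨q, hqlt⟩ : Fin n) : ℕ) = (k : ℕ); simp; omega)]
      rfl

end theta
end StdFam2

section MainEval
variable {V : Type*} [AddCommGroup V] [Module ℝ V]

theorem fin2_cases (s : Fin 2) : s = 0 ∨ s = 1 := by
  rcases (by omega : (s : ℕ) = 0 ∨ (s : ℕ) = 1) with h | h
  · exact Or.inl (Fin.ext h)
  · exact Or.inr (Fin.ext h)

theorem perm_fin2_cases (ρ : Equiv.Perm (Fin 2)) : ρ = 1 ∨ ρ = Equiv.swap 0 1 := by
  rcases fin2_cases (ρ 0) with h0 | h0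
  · left
    apply Equiv.ext; intro i
    rcases fin2_cases i with rfl | rfl
    · rw [h0]; rfl
    · rcases fin2_cases (ρ 1) with h2 | h2
      · exact absurd (ρ.injective (h2.trans h0.symm)) (by decide)
      · rw [h2]; rfl
  · right
    apply Equiv.ext; intro i
    rcases fin2_cases i with rfl | rfl
    · rw [h0, Equiv.swap_apply_left]
    · rcases fin2_cases (ρ 1) with h2 | h2
      · rw [h2, Equiv.swap_apply_right]
      · exact absurd (ρ.injective (h2.trans h0.symm)) (by decide)

theorem altPow_wP (ω : V [⋀^Fin 2]→ₗ[ℝ] ℝ) : ∀ (m : ℕ) (Q : Fin m → V × V),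
    IsStd ω Q → altPow ω m (wP Q) = (m.factorial : ℝ) := by
  intro m
  induction m with
  | zero =>
    intro Q _
    show (1 : ℝ) = _
    norm_num
  | succ n ih =>
    intro Q hQ
    classical
    have key := altWedge_eval (altPow ω n) ω (wP Q)
    set F : Equiv.Perm (Fin (2 * n) ⊕ Fin 2) → ℝ := fun σ =>
      ((Equiv.Perm.sign σ : ℤ) : ℝ) *
        (altPow ω n (fun i => wP Q (finSumFinEquiv (σ (Sum.inl i)))) *
         ω (fun i => wP Q (finSumFinEquiv (σ (Sum.inr i))))) with hF
    let g : Fin (n + 1) × Equiv.Perm (Fin (2 * n)) × Equiv.Perm (Fin 2) →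
        Equiv.Perm (Fin (2 * n) ⊕ Fin 2) :=
      fun t => θf t.1 * Equiv.sumCongr t.2.1 t.2.2
    have hg_inr : ∀ t (s : Fin 2), g t (Sum.inr s) = posP t.1 (t.2.2 s) := by
      rintro ⟨k, τ, ρ⟩ s
      show θf k (Equiv.sumCongr τ ρ (Sum.inr s)) = _
      rw [show Equiv.sumCongr τ ρ (Sum.inr s) = Sum.inr (ρ s) from rfl, θf_inr]
    have hg_inl : ∀ t (i : Fin (2 * n)), g t (Sum.inl i) = θf t.1 (Sum.inl (t.2.1 i)) := by
      rintro ⟨k, τ, ρ⟩ i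
      rfl
    have hg : Function.Injective g := by
      rintro ⟨k, τ, ρ⟩ ⟨k', τ', ρ'⟩ he
      have h0 := congrFun (congrArg (fun (e : Equiv.Perm (Fin (2*n) ⊕ Fin 2)) =>
        (e : Fin (2*n) ⊕ Fin 2 → Fin (2*n) ⊕ Fin 2)) he)
      have hr : ∀ s : Fin 2, posP k (ρ s) = posP k' (ρ' s) := by
        intro s
        rw [← hg_inr ⟨k, τ, ρ⟩ s, ← hg_inr ⟨k', τ', ρ'⟩ s]
        exact h0 (Sum.inr s)
      have hkk : k = k' := (posP_inj (hr 0)).1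
      have hρρ : ρ = ρ' := by
        apply Equiv.ext; intro s
        rcases fin2_cases s with rfl | rfl
        · exact (posP_inj (hr 0)).2
        · exact (posP_inj (hr 1)).2
      have hττ : τ = τ' := by
        subst hkk hρρ
        have hc : Equiv.sumCongr τ ρ = Equiv.sumCongr τ' ρ := mul_left_cancel he
        apply Equiv.ext; intro i
        have h2 := congrFun (congrArg (fun (e : Equiv.Perm (Fin (2*n) ⊕ Fin 2)) =>
          (e : Fin (2*n) ⊕ Fin 2 → Fin (2*n) ⊕ Fin 2)) hc) (Sum.inl i)
        simpa using h2
      rw [hkk, hρρ, hττ]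
    have hsupp : ∀ σ, F σ ≠ 0 → ∃ t, g t = σ := by
      intro σ hσ
      have hω : ω (fun i => wP Q (finSumFinEquiv (σ (Sum.inr i)))) ≠ 0 := by
        intro h0
        apply hσ
        rw [hF]; dsimp only; rw [h0]; ring
      rw [show (fun i : Fin 2 => wP Q (finSumFinEquiv (σ (Sum.inr i)))) =
        ![Uf Q (σ (Sum.inr 0)), Uf Q (σ (Sum.inr 1))] by
          rw [← vec2_eta (fun i : Fin 2 => wP Q (finSumFinEquiv (σ (Sum.inr i))))]
          simp only [Uf_eq]] at hω
      obtain ⟨k, hk⟩ := valU hQ _ _ hω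
      have hρ : ∃ ρ : Equiv.Perm (Fin 2), ∀ s, σ (Sum.inr s) = posP k (ρ s) := by
        rcases hk with ⟨ha, hb⟩ | ⟨ha, hb⟩
        · refine ⟨1, fun s => ?_⟩
          rcases fin2_cases s with rfl | rfl
          · exact ha
          · exact hb
        · refine ⟨Equiv.swap 0 1, fun s => ?_⟩
          rcases fin2_cases s with rfl | rfl
          · rw [Equiv.swap_apply_left]; exact ha
          · rw [Equiv.swap_apply_right]; exact hb
      obtain ⟨ρ, hρ⟩ := hρ
      set ψ := (θf k)⁻¹ * σ with hψ
      have hψr : ∀ s : Fin 2, ψ (Sum.inr s) = Sum.inr (ρ s) := by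
        intro s
        show (θf k)⁻¹ (σ (Sum.inr s)) = _
        rw [hρ s, ← θf_inr (k := k) (ρ s)]
        exact Equiv.symm_apply_apply _ _
      have hmaps : Set.MapsTo ψ (Set.range Sum.inl) (Set.range Sum.inl) := by
        apply (Equiv.Perm.perm_mapsTo_inl_iff_mapsTo_inr ψ).mpr
        rintro _ ⟨j, rfl⟩
        rw [hψr j]
        exact ⟨ρ j, rfl⟩
      obtain ⟨⟨τ, ρ₂⟩, hp⟩ := Equiv.Perm.mem_sumCongrHom_range_of_perm_mapsTo_inl hmaps
      have hρ₂ : ρ₂ = ρ := by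
        apply Equiv.ext; intro s
        have h2 : ψ (Sum.inr s) = Sum.inr (ρ₂ s) := by rw [← hp]; rfl
        rw [hψr s] at h2
        exact (Sum.inr_injective h2).symm
      refine ⟨⟨k, τ, ρ⟩, ?_⟩
      show θf k * Equiv.sumCongr τ ρ = σ
      have hp' : Equiv.sumCongr τ ρ₂ = ψ := hp
      rw [← hρ₂, hp', hψ]
      group
    have key2 : (((2 * n).factorial * Nat.factorial 2 : ℕ) : ℝ) *
        altWedge (altPow ω n) ω (wP Q) = ∑ σ, F σ := key
    rw [sum_support_image g hg F hsupp] at key2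
    have hval : ∀ t, F (g t) = (n.factorial : ℝ) := by
      rintro ⟨k, τ, ρ⟩
      have hsign : Equiv.Perm.sign (g ⟨k, τ, ρ⟩) = Equiv.Perm.sign τ * Equiv.Perm.sign ρ := by
        show Equiv.Perm.sign (θf k * Equiv.sumCongr τ ρ) = _
        rw [map_mul, θf_sign, Equiv.Perm.sign_sumCongr, one_mul]
      have hα : altPow ω n (fun i => wP Q (finSumFinEquiv ((g ⟨k, τ, ρ⟩) (Sum.inl i)))) =
          Equiv.Perm.sign τ • ((n.factorial : ℝ)) := by
        have e1 : (fun i => wP Q (finSumFinEquiv ((g ⟨k, τ, ρ⟩) (Sum.inl i)))) =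
            (wP (Qmod Q k)) ∘ τ := by
          funext i
          rw [Uf_eq, hg_inl ⟨k, τ, ρ⟩ i]
          exact θf_inl Q (τ i)
        rw [e1, AlternatingMap.map_perm, ih (Qmod Q k) (Qmod_isStd hQ k)]
      have hω : ω (fun i => wP Q (finSumFinEquiv ((g ⟨k, τ, ρ⟩) (Sum.inr i)))) =
          (Equiv.Perm.sign ρ : ℤ) := by
        have e1 : (fun i : Fin 2 => wP Q (finSumFinEquiv ((g ⟨k, τ, ρ⟩) (Sum.inr i)))) =
            ![getp (Q k) (ρ 0), getp (Q k) (ρ 1)] := by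
          rw [← vec2_eta (fun i : Fin 2 => wP Q (finSumFinEquiv ((g ⟨k, τ, ρ⟩) (Sum.inr i))))]
          simp only [Uf_eq, hg_inr, Uf_posP]
        rw [e1]
        rcases perm_fin2_cases ρ with hρ | hρ <;> subst hρ
        · rw [show ((1 : Equiv.Perm (Fin 2)) 0) = 0 from rfl,
            show ((1 : Equiv.Perm (Fin 2)) 1) = 1 from rfl]
          rw [show getp (Q k) 0 = (Q k).1 from rfl, show getp (Q k) 1 = (Q k).2 from rfl]
          rw [hQ.1 k, map_one]
          norm_num
        · rw [Equiv.swap_apply_left, Equiv.swap_apply_right]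
          rw [show getp (Q k) 1 = (Q k).2 from rfl, show getp (Q k) 0 = (Q k).1 from rfl]
          rw [omega_skew, hQ.1 k, Equiv.Perm.sign_swap (by decide)]
          norm_num
      rw [hF]; dsimp only
      rw [hα, hω, hsign]
      rcases Int.units_eq_one_or (Equiv.Perm.sign τ) with h | h <;>
        rcases Int.units_eq_one_or (Equiv.Perm.sign ρ) with h' | h' <;>
        rw [h, h'] <;> norm_num [Units.smul_def]
    rw [Finset.sum_congr rfl (fun t _ => hval t), Finset.sum_const, Finset.card_univ] at key2
    have hcard : Fintype.card (Fin (n + 1) × Equiv.Perm (Fin (2 * n)) × Equiv.Perm (Fin 2)) =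
        (n + 1) * ((2 * n).factorial * 2) := by
      simp [Fintype.card_perm]
    rw [hcard] at key2
    have hN : (((2 * n).factorial * Nat.factorial 2 : ℕ) : ℝ) ≠ 0 := by positivity
    have heq : (((2 * n).factorial * Nat.factorial 2 : ℕ) : ℝ) * altPow ω (n + 1) (wP Q) =
        (((2 * n).factorial * Nat.factorial 2 : ℕ) : ℝ) * ((n + 1).factorial : ℝ) := by
      rw [show altPow ω (n + 1) (wP Q) = altWedge (altPow ω n) ω (wP Q) from rfl, key2,
        nsmul_eq_mul, Nat.factorial_succ]
      push_cast [Nat.factorial]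
      ring
    exact mul_left_cancel₀ hN heq
end MainEval

section Tools
variable {V : Type*} [AddCommGroup V] [Module ℝ V]

theorem alt_eq_zero_of_kills {ι : Type*} [Fintype ι] [FiniteDimensional ℝ V]
    (T : V [⋀^ι]→ₗ[ℝ] ℝ) (hcard : Fintype.card ι = Module.finrank ℝ V) {X : V} (hX : X ≠ 0)
    (hk : ∀ v : ι → V, (∃ i, v i = X) → T v = 0) : T = 0 := by
  classical
  have hli : LinearIndepOn ℝ id ({X} : Set V) := (linearIndepOn_singleton_iff ℝ).mpr hX
  let b := Module.Basis.extend hli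
  haveI : Fintype (hli.extend (Set.subset_univ ({X} : Set V))) :=
    FiniteDimensional.fintypeBasisIndex b
  apply Module.Basis.ext_alternating b
  intro v hv
  have hcard2 : Fintype.card ι = Fintype.card (hli.extend (Set.subset_univ ({X} : Set V))) := by
    rw [hcard, Module.finrank_eq_card_basis b]
  have hbij : Function.Bijective v := (Fintype.bijective_iff_injective_and_card v).mpr
    ⟨hv, hcard2⟩
  obtain ⟨j, hj⟩ := hbij.2 ⟨X, hli.subset_extend _ (Set.mem_singleton X)⟩
  simp only [AlternatingMap.zero_apply]
  apply hk
  refine ⟨j, ?_⟩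
  rw [hj]
  exact Module.Basis.extend_apply_self hli _

theorem exists_omega_ker [FiniteDimensional ℝ V] (ω : V [⋀^Fin 2]→ₗ[ℝ] ℝ)
    (hodd : Odd (Module.finrank ℝ V)) :
    ∃ X : V, X ≠ 0 ∧ ∀ y, ω ![X, y] = 0 := by
  by_contra hc
  push_neg at hc
  have hsep : (Blf ω).SeparatingLeft := by
    intro x hx
    by_contra hx0
    obtain ⟨y, hy⟩ := hc x hx0
    exact hy (hx y)
  classical
  let b := Module.finBasis ℝ V
  rw [LinearMap.separatingLeft_iff_det_ne_zero b] at hsep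
  apply hsep
  set M := LinearMap.toMatrix₂ b b (Blf ω) with hM
  have hskew : M.transpose = -M := by
    ext i j
    rw [Matrix.transpose_apply, Matrix.neg_apply, hM, LinearMap.toMatrix₂_apply,
      LinearMap.toMatrix₂_apply]
    exact omega_skew ω _ _
  have h1 : M.det = -M.det := by
    conv_lhs => rw [← Matrix.det_transpose, hskew]
    rw [Matrix.det_neg, Fintype.card_fin, Odd.neg_one_pow hodd, neg_one_mul]
  linarith

end Tools

section ExistsStd
variable {V : Type*} [AddCommGroup V] [Module ℝ V]

theorem exists_std [FiniteDimensional ℝ V] (ω : V [⋀^Fin 2]→ₗ[ℝ] ℝ) :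
    ∀ (m : ℕ) (W : Submodule ℝ V), Module.finrank ℝ W = 2 * m →
      (∀ x ∈ W, (∀ y ∈ W, ω ![x, y] = 0) → x = 0) →
      ∃ Q : Fin m → V × V, (∀ k, (Q k).1 ∈ W ∧ (Q k).2 ∈ W) ∧ IsStd ω Q := by
  intro m
  induction m with
  | zero =>
    intro W _ _
    exact ⟨fun k => k.elim0, fun k => k.elim0,
      fun k => k.elim0, fun k _ => k.elim0, fun k _ => k.elim0, fun k _ _ => k.elim0⟩
  | succ m ih =>
    intro W hdim hnd
    obtain ⟨x, hxW, hx0⟩ : ∃ x ∈ W, x ≠ (0 : V) := by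
      by_contra hB
      push_neg at hB
      have hWbot : W = ⊥ := by rw [Submodule.eq_bot_iff]; exact hB
      rw [hWbot, finrank_bot] at hdim; omega
    have hex : ¬ (∀ y ∈ W, ω ![x, y] = 0) := fun h => hx0 (hnd x hxW h)
    push_neg at hex
    obtain ⟨y, hyW, hxy⟩ := hex
    set e := x with he
    obtain ⟨f, hfW, hef⟩ : ∃ f, f ∈ W ∧ ω ![e, f] = 1 := by
      refine ⟨(ω ![x, y])⁻¹ • y, W.smul_mem _ hyW, ?_⟩
      have hb : Blf ω e ((ω ![x, y])⁻¹ • y) = (ω ![x, y])⁻¹ • Blf ω e y :=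
        map_smul (Blf ω e) _ y
      show Blf ω e ((ω ![x, y])⁻¹ • y) = 1
      rw [hb]
      show (ω ![x, y])⁻¹ * ω ![x, y] = 1
      exact inv_mul_cancel₀ hxy
    have hfe : ω ![f, e] = -1 := by rw [omega_skew, hef]
    set φ : W →ₗ[ℝ] ℝ × ℝ :=
      LinearMap.prod ((Blf ω e).comp W.subtype) ((Blf ω f).comp W.subtype) with hφ
    have hφap : ∀ (z : V) (hz : z ∈ W), φ ⟨z, hz⟩ = (ω ![e, z], ω ![f, z]) := fun z hz => rfl
    have hφsurj : Function.Surjective φ := by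
      rintro ⟨s, t⟩
      have hmem : s • f + (-t) • e ∈ W := W.add_mem (W.smul_mem _ hfW) (W.smul_mem _ hxW)
      refine ⟨⟨s • f + (-t) • e, hmem⟩, ?_⟩
      rw [hφap]
      have h1 : ω ![e, s • f + (-t) • e] = s := by
        show Blf ω e (s • f + (-t) • e) = s
        rw [map_add, map_smul, map_smul]
        show s * ω ![e, f] + (-t) * ω ![e, e] = s
        rw [hef, omega_self]; ring
      have h2 : ω ![f, s • f + (-t) • e] = t := by
        show Blf ω f (s • f + (-t) • e) = t
        rw [map_add, map_smul, map_smul]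
        show s * ω ![f, f] + (-t) * ω ![f, e] = t
        rw [hfe, omega_self]; ring
      rw [h1, h2]
    have hker : Module.finrank ℝ (LinearMap.ker φ) = 2 * m := by
      have h3 := LinearMap.finrank_range_add_finrank_ker φ
      rw [LinearMap.range_eq_top.mpr hφsurj, finrank_top, hdim] at h3
      have h4 : Module.finrank ℝ (ℝ × ℝ) = 2 := by
        rw [Module.finrank_prod, Module.finrank_self]
      rw [h4] at h3
      omega
    set W' : Submodule ℝ V := (LinearMap.ker φ).map W.subtype with hW'
    have hW'rank : Module.finrank ℝ W' = 2 * m := by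
      rw [hW', Submodule.finrank_map_subtype_eq]; exact hker
    have hmemW' : ∀ z, z ∈ W' ↔ (z ∈ W ∧ ω ![e, z] = 0 ∧ ω ![f, z] = 0) := by
      intro z
      constructor
      · intro hz
        obtain ⟨w', hw'ker, hw'z⟩ := Submodule.mem_map.mp hz
        have hzW : z ∈ W := by rw [← hw'z]; exact w'.2
        have hφ0 : φ w' = 0 := hw'ker
        obtain ⟨zv, hzv⟩ := w'
        have : (ω ![e, zv], ω ![f, zv]) = (0, 0) := by rw [← hφap zv hzv]; exact hφ0
        have hz1 := congrArg Prod.fst this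
        have hz2 := congrArg Prod.snd this
        simp only at hz1 hz2
        have hzz : zv = z := hw'z
        exact ⟨hzW, by rw [← hzz]; exact hz1, by rw [← hzz]; exact hz2⟩
      · rintro ⟨hzW, h1, h2⟩
        refine Submodule.mem_map.mpr ⟨⟨z, hzW⟩, ?_, rfl⟩
        show φ ⟨z, hzW⟩ = 0
        rw [hφap, h1, h2]
        rfl
    have hW'le : ∀ z ∈ W', z ∈ W := fun z hz => ((hmemW' z).mp hz).1
    have he_orth : ∀ z ∈ W', ω ![e, z] = 0 := fun z hz => ((hmemW' z).mp hz).2.1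
    have hf_orth : ∀ z ∈ W', ω ![f, z] = 0 := fun z hz => ((hmemW' z).mp hz).2.2
    have hnd' : ∀ x' ∈ W', (∀ y' ∈ W', ω ![x', y'] = 0) → x' = 0 := by
      intro x' hx' hperp
      have hx'W := hW'le x' hx'
      apply hnd x' hx'W
      intro z hzW
      have hx'e : ω ![x', e] = 0 := by rw [omega_skew, he_orth x' hx', neg_zero]
      have hx'f : ω ![x', f] = 0 := by rw [omega_skew, hf_orth x' hx', neg_zero]
      set z' := z - ω ![e, z] • f + ω ![f, z] • e with hz'
      have hz'W' : z' ∈ W' := by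
        rw [hmemW']
        refine ⟨?_, ?_, ?_⟩
        · exact W.add_mem (W.sub_mem hzW (W.smul_mem _ hfW)) (W.smul_mem _ hxW)
        · show Blf ω e z' = 0
          rw [hz', map_add, map_sub, map_smul, map_smul]
          show Blf ω e z - ω ![e, z] * ω ![e, f] + ω ![f, z] * ω ![e, e] = 0
          rw [hef, omega_self]
          show ω ![e, z] - ω ![e, z] * 1 + ω ![f, z] * 0 = 0
          ring
        · show Blf ω f z' = 0
          rw [hz', map_add, map_sub, map_smul, map_smul]
          show Blf ω f z - ω ![e, z] * ω ![f, f] + ω ![f, z] * ω ![f, e] = 0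
          rw [hfe, omega_self]
          show ω ![f, z] - ω ![e, z] * 0 + ω ![f, z] * (-1) = 0
          ring
      have hkey := hperp z' hz'W'
      have hexp : ω ![x', z'] =
          ω ![x', z] - ω ![e, z] * ω ![x', f] + ω ![f, z] * ω ![x', e] := by
        show Blf ω x' z' = _
        rw [hz', map_add, map_sub, map_smul, map_smul]
        rfl
      rw [hexp, hx'e, hx'f] at hkey
      linarith
    obtain ⟨Q', hQ'mem, hQ'std⟩ := ih W' hW'rank hnd'
    set Q : Fin (m + 1) → V × V := Fin.snoc Q' (e, f) with hQ
    have hQcast : ∀ j : Fin m, Q (Fin.castSucc j) = Q' j := fun j => Fin.snoc_castSucc _ _ j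
    have hQlast : Q (Fin.last m) = (e, f) := Fin.snoc_last _ _
    have hmem1 : ∀ k, (Q k).1 ∈ W ∧ (Q k).2 ∈ W := by
      intro k
      refine Fin.lastCases ?_ ?_ k
      · rw [hQlast]; exact ⟨hxW, hfW⟩
      · intro j
        rw [hQcast]
        exact ⟨hW'le _ (hQ'mem j).1, hW'le _ (hQ'mem j).2⟩
    obtain ⟨hstd1, hstd11, hstd22, hstd12⟩ := hQ'std
    have hQ1W' : ∀ j : Fin m, (Q' j).1 ∈ W' := fun j => (hQ'mem j).1
    have hQ2W' : ∀ j : Fin m, (Q' j).2 ∈ W' := fun j => (hQ'mem j).2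
    refine ⟨Q, hmem1, ?_, ?_, ?_, ?_⟩
    · intro k
      refine Fin.lastCases ?_ ?_ k
      · rw [hQlast]; exact hef
      · intro j; rw [hQcast]; exact hstd1 j
    · intro k l
      refine Fin.lastCases ?_ ?_ k <;> [skip; intro j] <;>
        (refine Fin.lastCases ?_ ?_ l <;> [skip; intro j'])
      · rw [hQlast]; exact omega_self ω e
      · rw [hQlast, hQcast]; exact he_orth _ (hQ1W' j')
      · rw [hQlast, hQcast]
        rw [omega_skew, he_orth _ (hQ1W' j), neg_zero]
      · rw [hQcast, hQcast]; exact hstd11 j j'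
    · intro k l
      refine Fin.lastCases ?_ ?_ k <;> [skip; intro j] <;>
        (refine Fin.lastCases ?_ ?_ l <;> [skip; intro j'])
      · rw [hQlast]; exact omega_self ω f
      · rw [hQlast, hQcast]; exact hf_orth _ (hQ2W' j')
      · rw [hQlast, hQcast]
        rw [omega_skew, hf_orth _ (hQ2W' j), neg_zero]
      · rw [hQcast, hQcast]; exact hstd22 j j'
    · intro k l
      refine Fin.lastCases ?_ ?_ k <;> [skip; intro j] <;>
        (refine Fin.lastCases ?_ ?_ l <;> [skip; intro j'])
      · intro hkl; exact absurd rfl hkl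
      · intro _
        rw [hQlast, hQcast]
        exact he_orth _ (hQ2W' j')
      · intro _
        rw [hQcast, hQlast]
        show ω ![(Q' j).1, f] = 0
        rw [omega_skew, hf_orth _ (hQ1W' j), neg_zero]
      · intro hkl
        rw [hQcast, hQcast]
        refine hstd12 j j' (fun hee => hkl ?_)
        rw [hee]
end ExistsStd


/-- On a `(2n+1)`-dimensional real vector space `V`, one has `η ∧ ωⁿ ≠ 0`
if and only if the musical map `♭(X) = ω(X,·) + η(X)·η` is a linear isomorphism and there
exists a vector `R` with `ω(R,·) = 0` and `η R = 1`. -/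
theorem almost_cosymplectic_iff_flat_iso_and_reeb {V : Type*} [AddCommGroup V] [Module ℝ V]
    [FiniteDimensional ℝ V] {n : ℕ} (hdim : Module.finrank ℝ V = 2 * n + 1)
    (η : Module.Dual ℝ V) (ω : V [⋀^Fin 2]→ₗ[ℝ] ℝ) :
    altWedge (alt1 η) (altPow ω n) ≠ 0 ↔
      ((∃ e : V ≃ₗ[ℝ] Module.Dual ℝ V, ∀ X v : V, e X v = ω ![X, v] + η X * η v) ∧
        ∃ R : V, (∀ v : V, ω ![R, v] = 0) ∧ η R = 1) := by
  classical
  constructor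
  · intro hW
    have hA : ∀ X : V, (∀ y, ω ![X, y] = 0) → η X = 0 → X = 0 := by
      intro X hX hηX
      by_contra hX0
      apply hW
      apply alt_eq_zero_of_kills _ (by rw [Fintype.card_fin, hdim]; omega) hX0
      intro v hv
      refine kills_altWedge (X := X) ?_ (kills_altPow hX n) v hv
      rintro u ⟨i, hi⟩
      have h0 : i = 0 := Subsingleton.elim _ _
      rw [h0] at hi
      show η (u 0) = 0
      rw [hi, hηX]
    set flat : V →ₗ[ℝ] Module.Dual ℝ V := Blf ω + η.smulRight η with hflat
    have hflat_ap : ∀ X v : V, flat X v = ω ![X, v] + η X * η v := fun X v => rfl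
    have hker : LinearMap.ker flat = ⊥ := by
      rw [Submodule.eq_bot_iff]
      intro X hX
      have h1 : flat X = 0 := LinearMap.mem_ker.mp hX
      have h2 : ω ![X, X] + η X * η X = 0 := by
        rw [← hflat_ap X X, h1]; rfl
      rw [omega_self ω X, zero_add] at h2
      have h3 : η X = 0 := by nlinarith
      have h4 : ∀ y, ω ![X, y] = 0 := by
        intro y
        have h5 : ω ![X, y] + η X * η y = 0 := by rw [← hflat_ap X y, h1]; rfl
        rw [h3] at h5
        linarith
      exact hA X h4 h3
    have hinj : Function.Injective flat := LinearMap.ker_eq_bot.mp hker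
    have hsurj : Function.Surjective flat :=
      (LinearMap.injective_iff_surjective_of_finrank_eq_finrank
        (Subspace.dual_finrank_eq (K := ℝ) (V := V)).symm).mp hinj
    constructor
    · refine ⟨LinearEquiv.ofBijective flat ⟨hinj, hsurj⟩, fun X v => ?_⟩
      exact hflat_ap X v
    · obtain ⟨X, hX0, hXker⟩ := exists_omega_ker ω (by rw [hdim]; exact ⟨n, by ring⟩)
      have hηX : η X ≠ 0 := fun h => hX0 (hA X hXker h)
      refine ⟨(η X)⁻¹ • X, fun v => ?_, ?_⟩
      · have h1 : Blf ω ((η X)⁻¹ • X) = (η X)⁻¹ • Blf ω X := map_smul _ _ _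
        calc ω ![(η X)⁻¹ • X, v] = ((η X)⁻¹ • Blf ω X) v := by rw [← h1]; rfl
        _ = (η X)⁻¹ * ω ![X, v] := rfl
        _ = 0 := by rw [hXker v, mul_zero]
      · rw [map_smul]
        show (η X)⁻¹ * η X = 1
        exact inv_mul_cancel₀ hηX
  · rintro ⟨⟨eqv, heqv⟩, R, hRω, hηR⟩
    have hη_surj : Function.Surjective η := fun c =>
      ⟨c • R, by rw [map_smul, hηR, smul_eq_mul, mul_one]⟩
    have hWrank : Module.finrank ℝ (LinearMap.ker η) = 2 * n := by
      have h3 := LinearMap.finrank_range_add_finrank_ker η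
      rw [LinearMap.range_eq_top.mpr hη_surj, finrank_top, Module.finrank_self, hdim] at h3
      omega
    have hnd : ∀ x ∈ LinearMap.ker η, (∀ y ∈ LinearMap.ker η, ω ![x, y] = 0) → x = 0 := by
      intro x hx hperp
      have hx0 : η x = 0 := LinearMap.mem_ker.mp hx
      have hall : ∀ v, ω ![x, v] = 0 := by
        intro v
        have hv' : v - η v • R ∈ LinearMap.ker η := by
          rw [LinearMap.mem_ker, map_sub, map_smul, hηR, smul_eq_mul, mul_one, sub_self]
        have h1 : ω ![x, v - η v • R] = 0 := hperp _ hv'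
        have hxR : ω ![x, R] = 0 := by rw [omega_skew, hRω x, neg_zero]
        have h2 : ω ![x, v] - η v * ω ![x, R] = 0 := by
          calc ω ![x, v] - η v * ω ![x, R] = Blf ω x (v - η v • R) := by
                rw [map_sub, map_smul]; rfl
          _ = 0 := h1
        rw [hxR] at h2
        linarith
      have he0 : eqv x = 0 := by
        apply LinearMap.ext
        intro v
        rw [heqv x v, hall v, hx0]
        show (0 : ℝ) + 0 * η v = (0 : Module.Dual ℝ V) v
        simp
      have hx00 : eqv x = eqv 0 := by rw [he0, map_zero]
      exact eqv.injective hx00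
    obtain ⟨Q, hQmem, hQstd⟩ := exists_std ω n (LinearMap.ker η) hWrank hnd
    have hval := eval_E1 η ω R hRω hηR (wP Q)
    rw [altPow_wP ω n Q hQstd] at hval
    intro hzero
    rw [hzero] at hval
    have h0 : (0 : ℝ) = (n.factorial : ℝ) := by
      rw [← hval]
      rfl
    have := Nat.factorial_ne_zero n
    exact this (by exact_mod_cast h0.symm)
end
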